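/- arXiv:0806.3636 — 5 statements merged into one kernel-verified Lean document; each statement's English description precedes it below -/
import Mathlib

section
/- Let W = (a^{θ_n}_{c_n},…,a^{θ_1}_{c_1}) be an admissible sequence and 𝔭 = {𝔭₊, 𝔭₋, {q_i,r_i}_{i∈I}} a decomposition of [1,n] with 𝔭₊ ⊂ {i : θ_i = +1}, 𝔭₋ ⊂ {i : θ_i = −1}, and for each pair q_i ∈ {i : θ_i = −1}, r_i ∈ {i : θ_i = +1}, q_i > r_i. Then the oriented graph (σ, S, τ) with σ = {c_s : s ∈ 𝔭₊}, S = {(c_{q_i}, c_{r_i}) : i ∈ I}, τ = {c_t : t ∈ 𝔭₋} contains no circuits. -/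
/-- Lemma 1.7.1: for an admissible sequence `W` (indices `c i`, signs `θ i`,
with `i > j → c i ≠ c j ∨ (θ i = true ∧ θ j = false)`; `true` = creator) and a
decomposition `𝔭 = {𝔭₊, 𝔭₋, {(qᵢ,rᵢ)}}` of `[1,n]` with `𝔭₊` consisting of
creator positions, `𝔭₋` of annihilator positions, and each pair consisting of
an annihilator position `q` and a creator position `r` with `q > r`, the
associated graph `(σ, S, τ)` with `S = {(c_{qᵢ}, c_{rᵢ})}` contains no
circuits: there is no cyclic family of pairs in `S` in which the second index
of each pair coincides with the first index of the next. -/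
theorem decomposition_graph_no_circuits
    {ι : Type*} {n : ℕ} (c : Fin n → ι) (θ : Fin n → Bool)
    (hadm : ∀ i j : Fin n, j < i → c i ≠ c j ∨ (θ i = true ∧ θ j = false))
    (Pplus Pminus : Finset (Fin n)) (Pr : Finset (Fin n × Fin n))
    -- the parts cover [1,n] …
    (hcov : ∀ i : Fin n, i ∈ Pplus ∨ i ∈ Pminus ∨ ∃ p ∈ Pr, i = p.1 ∨ i = p.2)
    -- … and are pairwise disjoint
    (hd1 : ∀ i ∈ Pplus, i ∉ Pminus)
    (hd2 : ∀ p ∈ Pr, p.1 ∉ Pplus ∧ p.1 ∉ Pminus ∧ p.2 ∉ Pplus ∧ p.2 ∉ Pminus)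
    (hd3 : ∀ p ∈ Pr, ∀ q ∈ Pr, p ≠ q →
      p.1 ≠ q.1 ∧ p.1 ≠ q.2 ∧ p.2 ≠ q.1 ∧ p.2 ≠ q.2)
    (hd4 : ∀ p ∈ Pr, p.1 ≠ p.2)
    -- signs: `𝔭₊ ⊂ ω₊`, `𝔭₋ ⊂ ω₋`, and each pair `(q,r)` has `θ q = −1`,
    -- `θ r = +1`, `q > r`
    (hplus : ∀ i ∈ Pplus, θ i = true)
    (hminus : ∀ i ∈ Pminus, θ i = false)
    (hpair : ∀ p ∈ Pr, θ p.1 = false ∧ θ p.2 = true ∧ p.2 < p.1) :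
    ¬ ∃ (m : ℕ) (g : ZMod (m + 1) → Fin n × Fin n),
        (∀ i, g i ∈ Pr) ∧ ∀ i, c (g i).2 = c (g (i + 1)).1 := by
  rintro ⟨m, g, hg, hc⟩
  -- key: the second component strictly decreases around the circuit
  have key : ∀ i : ZMod (m + 1), (g (i + 1)).2 < (g i).2 := by
    intro i
    have hP := hg i
    have hQ := hg (i + 1)
    have hcc := hc i
    obtain ⟨hq1, _, hq21⟩ := hpair _ hQ
    obtain ⟨_, hp2, _⟩ := hpair _ hP
    have hne : (g i).2 ≠ (g (i + 1)).1 := by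
      by_cases h : g i = g (i + 1)
      · rw [h]; exact (hd4 _ hQ).symm
      · exact (hd3 _ hP _ hQ h).2.2.1
    have hlt : (g (i + 1)).1 < (g i).2 := by
      rcases lt_or_gt_of_ne hne with h | h
      · exfalso
        rcases hadm _ _ h with h' | h'
        · exact h' hcc.symm
        · rw [hq1] at h'; exact Bool.false_ne_true h'.1
      · exact h
    exact lt_trans hq21 hlt
  -- iterate: (g k).2.val + k ≤ (g 0).2.val
  have chain : ∀ k : ℕ, ((g (k : ZMod (m + 1))).2 : ℕ) + k ≤ ((g 0).2 : ℕ) := by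
    intro k
    induction k with
    | zero => simp
    | succ k ih =>
        have h := key (k : ZMod (m + 1))
        have : ((g ((k : ZMod (m + 1)) + 1)).2 : ℕ) + 1 ≤ ((g (k : ZMod (m + 1))).2 : ℕ) :=
          h
        have hcast : ((k + 1 : ℕ) : ZMod (m + 1)) = (k : ZMod (m + 1)) + 1 := by
          push_cast; ring
        rw [hcast]
        omega
  have := chain (((g 0).2 : ℕ) + 1)
  omega
end

section
/- Let 𝔅 be a Banach algebra, A_1,…,A_k, B ∈ 𝔅, and s < t reals. Consider, for locally integrable 𝔅-valued functions x: ℝ × 𝔛^k → 𝔅 symmetric in each word variable, the Skorokhod integral equation x_t = 𝐞 + ∑_{j=1}^k A_j ∮^j_{s,t} x + ∫_s^t B x_u du. Then this equation has a unique solution, given explicitly by x_t(t_{α_1},…,t_{α_k}) = 𝟏{s < s_1 < ⋯ < s_n < t} · e^{(t−s_n)B} A_{i_n} e^{(s_n−s_{n−1})B} A_{i_{n−1}} ⋯ A_{i_1} e^{(s_1−s)B}, where s_1 < ⋯ < s_n is the ordered union of the time points of the k word arguments and i_l = j if s_l belongs to the j-th word. -/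
open MeasureTheory

/-- The ordered exponential product
`e^{(t−s_n)B} A_{i_n} e^{(s_n−s_{n−1})B} ⋯ A_{i_1} e^{(s_1−s)B}`, evaluated on
the list `[(s_n,i_n),…,(s_1,i_1)]` of labelled time points given in
*decreasing* time order. -/
noncomputable def orderedProd {𝔅 : Type*} [NormedRing 𝔅] [NormedAlgebra ℝ 𝔅]
    {k : ℕ} (A : Fin k → 𝔅) (B : 𝔅) (s : ℝ) : ℝ → List (ℝ × Fin k) → 𝔅
  | t, [] => NormedSpace.exp ((t - s) • B)
  | t, (r, i) :: l => NormedSpace.exp ((t - r) • B) * A i * orderedProd A B s r l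

/-- The labelled points of a finite configuration `ξ ⊂ ℝ × Fin k`, listed in
decreasing (lexicographic) order. -/
noncomputable def sortedDesc {k : ℕ} (ξ : Finset (ℝ × Fin k)) : List (ℝ × Fin k) :=
  (((ξ.image (toLex : ℝ × Fin k → Lex (ℝ × Fin k))).sort (· ≤ ·)).reverse).map
    (ofLex : Lex (ℝ × Fin k) → ℝ × Fin k)

open Classical in
/-- The explicit kernel `u_s^t(A_1,…,A_k,B)`:
`𝟏{s < s_1 < ⋯ < s_n < t} · e^{(t−s_n)B} A_{i_n} ⋯ A_{i_1} e^{(s_1−s)B}`,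
as a function of the finite labelled configuration `ξ`.  (A configuration of
`k` symmetric word variables is identified, via the map `Ξ` of the paper, with
a finite set of labelled time points; almost every configuration has pairwise
distinct times.) -/
noncomputable def uKernel {𝔅 : Type*} [NormedRing 𝔅] [NormedAlgebra ℝ 𝔅]
    {k : ℕ} (A : Fin k → 𝔅) (B : 𝔅) (s t : ℝ) (ξ : Finset (ℝ × Fin k)) : 𝔅 :=
  if ∀ p ∈ ξ, s < p.1 ∧ p.1 < t then orderedProd A B s t (sortedDesc ξ) else 0

open Classical in
/-- `x` is a (locally integrable, symmetric — symmetry being built into the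
configuration-space description) solution of the Skorokhod integral equation
`x_t = 𝐞 + ∑_j A_j ∮ʲ_{s,t} x + ∫_s^t B x_u du`, written pointwise on
configurations with pairwise distinct time points also distinct from `s`
and `t`. -/
def IsSkorokhodSolution {𝔅 : Type*} [NormedRing 𝔅] [NormedAlgebra ℝ 𝔅]
    [CompleteSpace 𝔅] {k : ℕ} (A : Fin k → 𝔅) (B : 𝔅) (s : ℝ)
    (x : ℝ → Finset (ℝ × Fin k) → 𝔅) : Prop :=
  (∀ (ξ : Finset (ℝ × Fin k)) (a b : ℝ),
      IntervalIntegrable (fun u => x u ξ) volume a b) ∧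
  ∀ t, s < t → ∀ ξ : Finset (ℝ × Fin k),
    Set.InjOn Prod.fst (ξ : Set (ℝ × Fin k)) →
    (∀ p ∈ ξ, p.1 ≠ s ∧ p.1 ≠ t) →
    x t ξ = (if ξ = (∅ : Finset (ℝ × Fin k)) then 1 else 0)
      + (∑ p ∈ ξ, if s < p.1 ∧ p.1 < t then A p.2 * x p.1 (ξ.erase p) else 0)
      + B * ∫ u in s..t, x u ξ

/-! ### Auxiliary lemmas -/

section Aux

variable {𝔅 : Type*} [NormedRing 𝔅] [NormedAlgebra ℝ 𝔅] [CompleteSpace 𝔅]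
  {k : ℕ} (A : Fin k → 𝔅) (B : 𝔅) (s : ℝ)

lemma exp_cont (B : 𝔅) (c : ℝ) : Continuous fun u : ℝ => NormedSpace.exp ((u - c) • B) :=
  continuous_iff_continuousAt.2 fun u =>
    ((hasDerivAt_exp_smul_const' (𝕂 := ℝ) B (u - c)).comp_sub_const u c).continuousAt

lemma key_exp (B : 𝔅) (c t : ℝ) :
    ∫ u in c..t, B * NormedSpace.exp ((u - c) • B) = NormedSpace.exp ((t - c) • B) - 1 := by
  have h : ∀ u : ℝ, HasDerivAt (fun v : ℝ => NormedSpace.exp ((v - c) • B))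
      (B * NormedSpace.exp ((u - c) • B)) u := by
    intro u
    have h1 := hasDerivAt_exp_smul_const' (𝕂 := ℝ) B (u - c)
    exact h1.comp_sub_const u c
  have := intervalIntegral.integral_eq_sub_of_hasDerivAt
    (f := fun v : ℝ => NormedSpace.exp ((v - c) • B))
    (fun u _ => h u) ((continuous_const.mul (exp_cont B c)).intervalIntegrable c t)
  simp only [sub_self, zero_smul, NormedSpace.exp_zero] at this
  rw [this]

lemma sort_max_step {α : Type*} [LinearOrder α] (S : Finset α) (h : S.Nonempty) :
    S.sort (· ≤ ·) = (S.erase (S.max' h)).sort (· ≤ ·) ++ [S.max' h] := by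
  set M := S.max' h with hM
  have hMS : M ∈ S := S.max'_mem h
  have key : (S.erase M).val + {M} = S.val := by
    rw [Finset.erase_val, add_comm, Multiset.singleton_add, Multiset.cons_erase hMS]
  apply List.Perm.eq_of_pairwise' (S.pairwise_sort _) ?_ ?_
  · rw [List.pairwise_append]
    refine ⟨(S.erase M).pairwise_sort _, List.pairwise_singleton _ M, ?_⟩
    intro a ha b hb
    rw [List.mem_singleton] at hb
    subst hb
    exact S.le_max' a (Finset.mem_of_mem_erase ((Finset.mem_sort _).mp ha))
  · refine List.Perm.symm (Multiset.coe_eq_coe.mp ?_)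
    rw [Finset.sort_eq, ← key, Finset.erase_val, ← Multiset.coe_add, ← Finset.erase_val,
      Finset.sort_eq, Multiset.coe_singleton]

lemma sortedDesc_cons (ξ : Finset (ℝ × Fin k))
    (h : (ξ.image (toLex : ℝ × Fin k → Lex (ℝ × Fin k))).Nonempty) :
    sortedDesc ξ =
      ofLex ((ξ.image toLex).max' h) ::
        sortedDesc (ξ.erase (ofLex ((ξ.image toLex).max' h))) := by
  set S := ξ.image (toLex : ℝ × Fin k → Lex (ℝ × Fin k)) with hS
  set M := S.max' h with hM
  have himg : (ξ.erase (ofLex M)).image (toLex : ℝ × Fin k → Lex (ℝ × Fin k)) = S.erase M := by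
    rw [hS, Finset.image_erase toLex.injective]
    congr
  unfold sortedDesc
  rw [himg, ← hS, sort_max_step S h, ← hM]
  simp only [List.reverse_append, List.reverse_cons, List.reverse_nil, List.nil_append,
    List.singleton_append, List.map_cons]

lemma max_mem_and_le (ξ : Finset (ℝ × Fin k))
    (h : (ξ.image (toLex : ℝ × Fin k → Lex (ℝ × Fin k))).Nonempty) :
    ofLex ((ξ.image toLex).max' h) ∈ ξ ∧
      ∀ p ∈ ξ, p.1 ≤ (ofLex ((ξ.image toLex).max' h)).1 := by
  set M := (ξ.image (toLex : ℝ × Fin k → Lex (ℝ × Fin k))).max' h with hM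
  have hmem : M ∈ ξ.image toLex := Finset.max'_mem _ h
  obtain ⟨a, ha, hae⟩ := Finset.mem_image.mp hmem
  constructor
  · show ofLex M ∈ ξ
    rw [← hae]; simpa using ha
  · intro p hp
    have := Finset.le_max' (ξ.image toLex) (toLex p) (Finset.mem_image_of_mem _ hp)
    rw [← hM] at this
    rcases Prod.Lex.le_iff.mp this with h1 | ⟨h1, _⟩
    · exact le_of_lt h1
    · exact le_of_eq h1

lemma orderedProd_nil (t : ℝ) :
    orderedProd A B s t ([] : List (ℝ × Fin k)) = NormedSpace.exp ((t - s) • B) := rfl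

lemma orderedProd_cons (p : ℝ × Fin k) (l : List (ℝ × Fin k)) (t : ℝ) :
    orderedProd A B s t (p :: l)
      = NormedSpace.exp ((t - p.1) • B) * A p.2 * orderedProd A B s p.1 l := by
  obtain ⟨r, i⟩ := p
  rfl

lemma orderedProd_continuous (l : List (ℝ × Fin k)) :
    Continuous fun t => orderedProd A B s t l := by
  cases l with
  | nil => simpa only [orderedProd_nil] using exp_cont (𝔅 := 𝔅) B s
  | cons p l =>
      simp only [orderedProd_cons]
      exact (exp_cont B p.1).mul continuous_const |>.mul continuous_const

lemma sortedDesc_empty : sortedDesc (∅ : Finset (ℝ × Fin k)) = [] := by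
  simp [sortedDesc]

lemma uKernel_pos {t : ℝ} {ξ : Finset (ℝ × Fin k)} (h : ∀ p ∈ ξ, s < p.1 ∧ p.1 < t) :
    uKernel A B s t ξ = orderedProd A B s t (sortedDesc ξ) := by
  unfold uKernel; exact if_pos h

lemma uKernel_neg {t : ℝ} {ξ : Finset (ℝ × Fin k)} (h : ¬ ∀ p ∈ ξ, s < p.1 ∧ p.1 < t) :
    uKernel A B s t ξ = 0 := by
  unfold uKernel; exact if_neg h

lemma measurableSet_cond (ξ : Finset (ℝ × Fin k)) :
    MeasurableSet {u : ℝ | ∀ p ∈ ξ, s < p.1 ∧ p.1 < u} := by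
  have : {u : ℝ | ∀ p ∈ ξ, s < p.1 ∧ p.1 < u}
      = ⋂ p ∈ ξ, ({u : ℝ | s < p.1} ∩ Set.Ioi p.1) := by
    ext u; simp [Set.mem_iInter, Set.mem_Ioi]
  rw [this]
  exact MeasurableSet.biInter ξ.countable_toSet
    (fun p _ => (MeasurableSet.const _).inter measurableSet_Ioi)

lemma uKernel_intervalIntegrable (ξ : Finset (ℝ × Fin k)) (a b : ℝ) :
    IntervalIntegrable (fun u => uKernel A B s u ξ) volume a b := by
  have hfun : (fun u => uKernel A B s u ξ)
      = Set.indicator {u : ℝ | ∀ p ∈ ξ, s < p.1 ∧ p.1 < u}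
          (fun u => orderedProd A B s u (sortedDesc ξ)) := by
    funext u
    by_cases h : ∀ p ∈ ξ, s < p.1 ∧ p.1 < u
    · rw [Set.indicator_of_mem (show u ∈ {u : ℝ | ∀ p ∈ ξ, s < p.1 ∧ p.1 < u} from h),
        uKernel_pos A B s h]
    · rw [Set.indicator_of_notMem (show u ∉ {u : ℝ | ∀ p ∈ ξ, s < p.1 ∧ p.1 < u} from h),
        uKernel_neg A B s h]
  rw [hfun, intervalIntegrable_iff]
  exact ((orderedProd_continuous A B s (sortedDesc ξ)).integrableOn_uIoc).indicator
    (measurableSet_cond s ξ)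

lemma uKernel_empty (u : ℝ) :
    uKernel A B s u (∅ : Finset (ℝ × Fin k)) = NormedSpace.exp ((u - s) • B) := by
  rw [uKernel_pos A B s (by simp), sortedDesc_empty, orderedProd_nil]

end Aux

/-- Theorem 2.2.1: the Skorokhod integral equation
`x_t = 𝐞 + ∑_{j=1}^k A_j ∮ʲ_{s,t} x + ∫_s^t B x_u du` has the explicit kernel
`u_s^t(A_1,…,A_k,B)` as a solution, and this solution is unique (almost
everywhere, i.e. on configurations with pairwise distinct time points distinct
from `s` and `t`). -/
theorem skorokhod_equation_existence_uniqueness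
    {𝔅 : Type*} [NormedRing 𝔅] [NormedAlgebra ℝ 𝔅] [CompleteSpace 𝔅]
    {k : ℕ} (A : Fin k → 𝔅) (B : 𝔅) (s : ℝ) :
    IsSkorokhodSolution A B s (fun t ξ => uKernel A B s t ξ) ∧
    ∀ x : ℝ → Finset (ℝ × Fin k) → 𝔅, IsSkorokhodSolution A B s x →
      ∀ t, s < t → ∀ ξ : Finset (ℝ × Fin k),
        Set.InjOn Prod.fst (ξ : Set (ℝ × Fin k)) →
        (∀ p ∈ ξ, p.1 ≠ s ∧ p.1 ≠ t) →
        x t ξ = uKernel A B s t ξ := by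
  have hex : IsSkorokhodSolution A B s (fun t ξ => uKernel A B s t ξ) := by
    constructor
    · exact fun ξ a b => uKernel_intervalIntegrable A B s ξ a b
    · intro t ht ξ hinj hdis
      beta_reduce
      by_cases hall : ∀ p ∈ ξ, s < p.1 ∧ p.1 < t
      · -- all points inside (s,t)
        by_cases hempty : ξ = ∅
        · subst hempty
          have hpull : B * ∫ u in s..t, NormedSpace.exp ((u - s) • B)
              = ∫ u in s..t, B * NormedSpace.exp ((u - s) • B) := by
            have := (ContinuousLinearMap.mul ℝ 𝔅 B).intervalIntegral_comp_comm
              ((exp_cont B s).intervalIntegrable (μ := volume) s t)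
            simpa [ContinuousLinearMap.mul_apply'] using this.symm
          have h1 : (∫ u in s..t, uKernel A B s u (∅ : Finset (ℝ × Fin k)))
              = ∫ u in s..t, NormedSpace.exp ((u - s) • B) :=
            intervalIntegral.integral_congr (fun u _ => uKernel_empty A B s u)
          rw [uKernel_pos A B s (by simp), sortedDesc_empty, orderedProd_nil, if_pos rfl,
            Finset.sum_empty, h1, hpull, key_exp]
          abel
        · -- nonempty case
          have hne : ξ.Nonempty := Finset.nonempty_of_ne_empty hempty
          have himg : (ξ.image (toLex : ℝ × Fin k → Lex (ℝ × Fin k))).Nonempty :=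
            hne.image _
          set m : ℝ × Fin k := ofLex ((ξ.image toLex).max' himg) with hm
          obtain ⟨hmξ, hmax⟩ := max_mem_and_le ξ himg
          rw [← hm] at hmξ hmax
          have hms : s < m.1 ∧ m.1 < t := hall m hmξ
          have hmaxlt : ∀ p ∈ ξ, p ≠ m → p.1 < m.1 := by
            intro p hp hpne
            refine lt_of_le_of_ne (hmax p hp) ?_
            intro h'
            exact hpne (hinj (Finset.mem_coe.mpr hp) (Finset.mem_coe.mpr hmξ) h')
          have hsd : sortedDesc ξ = m :: sortedDesc (ξ.erase m) := by
            rw [hm]; exact sortedDesc_cons ξ himg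
          set C : 𝔅 := orderedProd A B s m.1 (sortedDesc (ξ.erase m)) with hC
          have hker : ∀ u : ℝ, uKernel A B s u ξ
              = if m.1 < u then NormedSpace.exp ((u - m.1) • B) * (A m.2 * C) else 0 := by
            intro u
            by_cases hu : m.1 < u
            · rw [if_pos hu, uKernel_pos A B s (fun p hp =>
                ⟨(hall p hp).1, lt_of_le_of_lt (hmax p hp) hu⟩), hsd, orderedProd_cons, ← hC,
                mul_assoc]
            · rw [if_neg hu, uKernel_neg A B s (fun hcon => hu (hcon m hmξ).2)]
          -- LHS
          have hLHS : uKernel A B s t ξ = NormedSpace.exp ((t - m.1) • B) * (A m.2 * C) := by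
            rw [hker t, if_pos hms.2]
          -- erase kernel
          have hkerase : uKernel A B s m.1 (ξ.erase m) = C := by
            rw [uKernel_pos A B s (fun q hq => ⟨(hall q (Finset.mem_of_mem_erase hq)).1,
              hmaxlt q (Finset.mem_of_mem_erase hq) (Finset.ne_of_mem_erase hq)⟩), ← hC]
          -- sum
          have hsum : (∑ p ∈ ξ, if s < p.1 ∧ p.1 < t
                then A p.2 * uKernel A B s p.1 (ξ.erase p) else 0) = A m.2 * C := by
            rw [Finset.sum_eq_single_of_mem m hmξ]
            · rw [if_pos hms, hkerase]
            · intro p hp hpne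
              by_cases hc : s < p.1 ∧ p.1 < t
              · rw [if_pos hc]
                have : uKernel A B s p.1 (ξ.erase p) = 0 := by
                  apply uKernel_neg
                  intro hcon
                  have hmem : m ∈ ξ.erase p := Finset.mem_erase.mpr ⟨fun h => hpne h.symm, hmξ⟩
                  exact absurd (hcon m hmem).2 (not_lt.mpr (le_of_lt (hmaxlt p hp hpne)))
                rw [this, mul_zero]
              · rw [if_neg hc]
          -- integral
          have hint1 : ∫ u in s..m.1, uKernel A B s u ξ = 0 := by
            rw [intervalIntegral.integral_congr (g := fun _ => (0 : 𝔅)), intervalIntegral.integral_zero]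
            intro u hu
            rw [Set.uIcc_of_le (le_of_lt hms.1)] at hu
            show uKernel A B s u ξ = 0
            rw [hker u, if_neg (not_lt.mpr hu.2)]
          have hint2 : ∫ u in m.1..t, uKernel A B s u ξ
              = (∫ u in m.1..t, NormedSpace.exp ((u - m.1) • B)) * (A m.2 * C) := by
            have hcongr : ∫ u in m.1..t, uKernel A B s u ξ
                = ∫ u in m.1..t, NormedSpace.exp ((u - m.1) • B) * (A m.2 * C) := by
              apply intervalIntegral.integral_congr_ae
              filter_upwards with u hu
              rw [Set.uIoc_of_le (le_of_lt hms.2)] at hu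
              show uKernel A B s u ξ = _
              rw [hker u, if_pos hu.1]
            rw [hcongr]
            have := (ContinuousLinearMap.mul ℝ 𝔅).flip (A m.2 * C) |>.intervalIntegral_comp_comm
              ((exp_cont B m.1).intervalIntegrable (μ := volume) m.1 t)
            simpa [ContinuousLinearMap.flip_apply, ContinuousLinearMap.mul_apply'] using this
          have hsplit : ∫ u in s..t, uKernel A B s u ξ
              = (∫ u in s..m.1, uKernel A B s u ξ) + ∫ u in m.1..t, uKernel A B s u ξ :=
            (intervalIntegral.integral_add_adjacent_intervals
              (uKernel_intervalIntegrable A B s ξ s m.1)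
              (uKernel_intervalIntegrable A B s ξ m.1 t)).symm
          have hBint : B * ∫ u in m.1..t, NormedSpace.exp ((u - m.1) • B)
              = NormedSpace.exp ((t - m.1) • B) - 1 := by
            have := (ContinuousLinearMap.mul ℝ 𝔅 B).intervalIntegral_comp_comm
              ((exp_cont B m.1).intervalIntegrable (μ := volume) m.1 t)
            rw [← key_exp B m.1 t]
            simpa [ContinuousLinearMap.mul_apply'] using this.symm
          rw [hLHS, if_neg hempty, hsum, hsplit, hint1, hint2, zero_add, zero_add,
            show B * ((∫ u in m.1..t, NormedSpace.exp ((u - m.1) • B)) * (A m.2 * C))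
              = (NormedSpace.exp ((t - m.1) • B) - 1) * (A m.2 * C) from by
                rw [← mul_assoc, hBint],
            sub_mul, one_mul]
          abel
      · -- some point outside (s,t)
        push_neg at hall
        obtain ⟨q, hq, hqc⟩ := hall
        have hq' : q.1 < s ∨ t < q.1 := by
          rcases lt_trichotomy q.1 s with h1 | h1 | h1
          · exact Or.inl h1
          · exact absurd h1 (hdis q hq).1
          rcases lt_trichotomy q.1 t with h2 | h2 | h2
          · exact absurd (hqc h1) (not_le.mpr h2)
          · exact absurd h2 (hdis q hq).2
          · exact Or.inr h2
        have hallneg : ¬ ∀ p ∈ ξ, s < p.1 ∧ p.1 < t := by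
          intro hcon
          rcases hq' with h | h
          · exact absurd (hcon q hq).1 (not_lt.mpr (le_of_lt h))
          · exact absurd (hcon q hq).2 (not_lt.mpr (le_of_lt h))
        have hne : ξ ≠ ∅ := Finset.ne_empty_of_mem hq
        have hLHS : uKernel A B s t ξ = 0 := uKernel_neg A B s hallneg
        have hsum : (∑ p ∈ ξ, if s < p.1 ∧ p.1 < t
              then A p.2 * uKernel A B s p.1 (ξ.erase p) else 0) = 0 := by
          apply Finset.sum_eq_zero
          intro p hp
          by_cases hc : s < p.1 ∧ p.1 < t
          · rw [if_pos hc]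
            have hqp : q ≠ p := by
              intro h; subst h
              rcases hq' with h | h
              · exact absurd hc.1 (not_lt.mpr (le_of_lt h))
              · exact absurd hc.2 (not_lt.mpr (le_of_lt h))
            have : uKernel A B s p.1 (ξ.erase p) = 0 := by
              apply uKernel_neg
              intro hcon
              have hmem : q ∈ ξ.erase p := Finset.mem_erase.mpr ⟨hqp, hq⟩
              rcases hq' with h | h
              · exact absurd (hcon q hmem).1 (not_lt.mpr (le_of_lt h))
              · exact absurd (hcon q hmem).2 (not_lt.mpr (le_of_lt (lt_trans hc.2 h)))
            rw [this, mul_zero]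
          · rw [if_neg hc]
        have hint : ∫ u in s..t, uKernel A B s u ξ = 0 := by
          rw [intervalIntegral.integral_congr (g := fun _ => (0 : 𝔅)),
            intervalIntegral.integral_zero]
          intro u hu
          rw [Set.uIcc_of_le (le_of_lt ht)] at hu
          show uKernel A B s u ξ = 0
          apply uKernel_neg A B s
          intro hcon
          rcases hq' with h | h
          · exact absurd (hcon q hq).1 (not_lt.mpr (le_of_lt h))
          · exact absurd (hcon q hq).2 (not_lt.mpr (le_of_lt (lt_of_le_of_lt hu.2 h)))
        rw [hLHS, if_neg hne, hsum, hint, mul_zero]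
        simp
  refine ⟨hex, ?_⟩
  intro x hx
  suffices H : ∀ n : ℕ, ∀ ξ : Finset (ℝ × Fin k), ξ.card = n → ∀ t, s < t →
      Set.InjOn Prod.fst (ξ : Set (ℝ × Fin k)) →
      (∀ p ∈ ξ, p.1 ≠ s ∧ p.1 ≠ t) → x t ξ = uKernel A B s t ξ by
    exact fun t ht ξ h1 h2 => H ξ.card ξ rfl t ht h1 h2
  intro n
  induction n using Nat.strong_induction_on with
  | _ n IH =>
  intro ξ hcard t ht hinj hdis
  have hyint : ∀ a b : ℝ, IntervalIntegrable
      (fun u => x u ξ - uKernel A B s u ξ) volume a b :=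
    fun a b => (hx.1 ξ a b).sub (hex.1 ξ a b)
  set g : ℝ → 𝔅 := fun r => ∫ u in s..r, (x u ξ - uKernel A B s u ξ) with hgdef
  have hgcont : Continuous g := intervalIntegral.continuous_primitive hyint s
  have claim1 : ∀ r, s < r → (∀ p ∈ ξ, p.1 ≠ r) →
      x r ξ - uKernel A B s r ξ = B * g r := by
    intro r hr hner
    have hd : ∀ p ∈ ξ, p.1 ≠ s ∧ p.1 ≠ r := fun p hp => ⟨(hdis p hp).1, hner p hp⟩
    have e1 := hx.2 r hr ξ hinj hd
    have e2 := hex.2 r hr ξ hinj hd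
    simp only at e2
    have hsum : ∀ p ∈ ξ, (if s < p.1 ∧ p.1 < r then A p.2 * x p.1 (ξ.erase p) else 0)
        = (if s < p.1 ∧ p.1 < r then A p.2 * uKernel A B s p.1 (ξ.erase p) else 0) := by
      intro p hp
      by_cases hc : s < p.1 ∧ p.1 < r
      · rw [if_pos hc, if_pos hc]
        congr 1
        have hlt : (ξ.erase p).card < n := by
          rw [Finset.card_erase_of_mem hp, hcard]
          have : 0 < n := by
            rw [← hcard]
            exact Finset.card_pos.mpr ⟨p, hp⟩
          omega
        refine IH _ hlt (ξ.erase p) rfl p.1 hc.1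
          (hinj.mono (Finset.coe_subset.mpr (Finset.erase_subset _ _))) ?_
        intro q hq
        refine ⟨(hdis q (Finset.mem_of_mem_erase hq)).1, ?_⟩
        intro hq1
        exact (Finset.ne_of_mem_erase hq)
          (hinj (Finset.mem_coe.mpr (Finset.mem_of_mem_erase hq)) (Finset.mem_coe.mpr hp) hq1)
      · rw [if_neg hc, if_neg hc]
    calc x r ξ - uKernel A B s r ξ
        = (B * ∫ u in s..r, x u ξ) - B * ∫ u in s..r, uKernel A B s u ξ := by
          rw [e1, e2, Finset.sum_congr rfl hsum]; abel
      _ = B * g r := by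
          rw [← mul_sub, hgdef,
            ← intervalIntegral.integral_sub (hx.1 ξ s r) (hex.1 ξ s r)]
  have hF : ∀ᵐ u : ℝ, u ∉ (↑(ξ.image Prod.fst) : Set ℝ) :=
    measure_eq_zero_iff_ae_notMem.mp (Finset.measure_zero _ _)
  have claim2 : ∀ r, s ≤ r → g r = ∫ u in s..r, B * g u := by
    intro r hr
    apply intervalIntegral.integral_congr_ae
    filter_upwards [hF] with u hu hmem
    rw [Set.uIoc_of_le hr] at hmem
    refine claim1 u hmem.1 ?_
    intro p hp hpu
    exact hu (Finset.mem_coe.mpr (by rw [← hpu]; exact Finset.mem_image_of_mem _ hp))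
  have hBg : Continuous fun u => B * g u := continuous_const.mul hgcont
  set G : ℝ → 𝔅 := fun r => ∫ u in s..r, B * g u with hGdef
  have hGcont : Continuous G :=
    intervalIntegral.continuous_primitive (fun a b => hBg.intervalIntegrable a b) s
  have hG : ∀ r : ℝ, HasDerivAt G (B * g r) r := by
    intro r
    exact intervalIntegral.integral_hasDerivAt_right (hBg.intervalIntegrable s r)
      hBg.stronglyMeasurable.stronglyMeasurableAtFilter hBg.continuousAt
  have hG0 : Set.EqOn G (fun _ => (0 : 𝔅)) (Set.Icc s t) := by
    refine ODE_solution_unique_of_mem_Icc_right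
      (v := fun _ z => B * z) (s := fun _ => Set.univ)
      (K := ‖ContinuousLinearMap.mul ℝ 𝔅 B‖₊)
      (fun _ => ?lip) hGcont.continuousOn ?hf' (fun _ _ => trivial)
      continuousOn_const ?hg' (fun _ _ => trivial) ?ha
    case lip =>
      have h := (ContinuousLinearMap.mul ℝ 𝔅 B).lipschitz
      have h2 : LipschitzWith ‖ContinuousLinearMap.mul ℝ 𝔅 B‖₊ (fun z : 𝔅 => B * z) :=
        fun a b => by simpa [ContinuousLinearMap.mul_apply'] using h a b
      exact fun _ => h2.lipschitzOnWith
    case hf' =>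
      intro r hr
      have hgr : g r = G r := claim2 r hr.1
      have := (hG r).hasDerivWithinAt (s := Set.Ici r)
      rwa [hgr] at this
    case hg' =>
      intro r _
      simpa [mul_zero] using (hasDerivWithinAt_const r (Set.Ici r) (0 : 𝔅))
    case ha =>
      show G s = 0
      rw [hGdef]
      exact intervalIntegral.integral_same
  have h1 := claim1 t ht (fun p hp => (hdis p hp).2)
  have h2 : g t = 0 := by
    rw [claim2 t (le_of_lt ht)]
    exact hG0 ⟨le_of_lt ht, le_refl t⟩
  rw [h2, mul_zero] at h1
  exact sub_eq_zero.mp h1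
end

section
/- Unitarity conditions: let A_1, A_0, A_{−1}, B be bounded operators on a Hilbert space 𝔨 and set C_1 = B + B⁺ + A_1⁺A_1, C_3 = A_0⁺ + A_0 + A_0⁺A_0, C_7 = A_0 + A_0⁺ + A_0A_0⁺, C_2 = A_{−1}⁺ + A_1 + A_0⁺A_1, C_5 = B + B⁺ + A_{−1}A_{−1}⁺, C_6 = A_1 + A_{−1}⁺ + A_0A_{−1}⁺. Then the system C_1 = C_2 = C_3 = C_5 = C_6 = C_7 = 0 holds if and only if there exists a unitary operator Υ with A_0 = Υ − 1, A_1 = −Υ A_{−1}⁺, and B + B⁺ = −A_1⁺A_1 = −A_{−1}A_{−1}⁺. -/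
open ContinuousLinearMap

/-- Unitarity conditions for the quantum stochastic evolution: with
`C₁ = B + B⁺ + A₁⁺A₁`, `C₂ = A₋₁⁺ + A₁ + A₀⁺A₁`, `C₃ = A₀⁺ + A₀ + A₀⁺A₀`,
`C₅ = B + B⁺ + A₋₁A₋₁⁺`, `C₆ = A₁ + A₋₁⁺ + A₀A₋₁⁺`,
`C₇ = A₀ + A₀⁺ + A₀A₀⁺`, the system `C₁ = C₂ = C₃ = C₅ = C₆ = C₇ = 0` holds
iff there is a unitary `Υ` with `A₀ = Υ − 1`, `A₁ = −ΥA₋₁⁺` and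
`B + B⁺ = −A₁⁺A₁ = −A₋₁A₋₁⁺`. -/
theorem unitarity_conditions
    {𝔨 : Type*} [NormedAddCommGroup 𝔨] [InnerProductSpace ℂ 𝔨] [CompleteSpace 𝔨]
    (A1 A0 Am B : 𝔨 →L[ℂ] 𝔨) :
    (B + adjoint B + adjoint A1 * A1 = 0 ∧
     adjoint Am + A1 + adjoint A0 * A1 = 0 ∧
     adjoint A0 + A0 + adjoint A0 * A0 = 0 ∧
     B + adjoint B + Am * adjoint Am = 0 ∧
     A1 + adjoint Am + A0 * adjoint Am = 0 ∧
     A0 + adjoint A0 + A0 * adjoint A0 = 0)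
    ↔
    ∃ Υ : 𝔨 →L[ℂ] 𝔨,
      adjoint Υ * Υ = 1 ∧ Υ * adjoint Υ = 1 ∧
      A0 = Υ - 1 ∧
      A1 = -(Υ * adjoint Am) ∧
      B + adjoint B = -(adjoint A1 * A1) ∧
      B + adjoint B = -(Am * adjoint Am) := by
  simp only [← star_eq_adjoint]
  constructor
  · rintro ⟨h1, h2, h3, h5, _h6, h7⟩
    refine ⟨A0 + 1, ?_, ?_, ?_, ?_, ?_, ?_⟩
    · have : star (A0 + 1) * (A0 + 1)
        = (star A0 + A0 + star A0 * A0) + 1 := by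
        simp only [star_add, star_one]; noncomm_ring
      rw [this, h3, zero_add]
    · have : (A0 + 1) * star (A0 + 1)
        = (A0 + star A0 + A0 * star A0) + 1 := by
        simp only [star_add, star_one]; noncomm_ring
      rw [this, h7, zero_add]
    · abel
    · -- from h2, multiply on the left by (A0 + 1)
      have hUU : (A0 + 1) * star (A0 + 1) = 1 := by
        have : (A0 + 1) * star (A0 + 1)
          = (A0 + star A0 + A0 * star A0) + 1 := by
          simp only [star_add, star_one]; noncomm_ring
        rw [this, h7, zero_add]
      have key : (A0 + 1) * (star Am + A1 + star A0 * A1)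
          = (A0 + 1) * star Am + A1 := by
        have : (A0 + 1) * (star Am + A1 + star A0 * A1)
            = (A0 + 1) * star Am + ((A0 + 1) * star (A0 + 1)) * A1 := by
          simp only [star_add, star_one]; noncomm_ring
        rw [this, hUU, one_mul]
      rw [h2, mul_zero] at key
      have h := key.symm
      calc A1 = ((A0 + 1) * star Am + A1) - (A0 + 1) * star Am := by abel
        _ = -((A0 + 1) * star Am) := by rw [h]; abel
    · calc B + star B = (B + star B + star A1 * A1) - star A1 * A1 := by abel
        _ = -(star A1 * A1) := by rw [h1]; abel
    · calc B + star B = (B + star B + Am * star Am) - Am * star Am := by abel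
        _ = -(Am * star Am) := by rw [h5]; abel
  · rintro ⟨Υ, hUU, hUUr, hA0, hA1, hB1, hB2⟩
    have hadj : star A0 = star Υ - 1 := by rw [hA0, star_sub, star_one]
    have hA1adj : star A1 = -(Am * star Υ) := by
      rw [hA1, star_neg, star_mul, star_star]
    refine ⟨?_, ?_, ?_, ?_, ?_, ?_⟩
    · rw [hB1, hA1adj, hA1]
      have : -(Am * star Υ) * -(Υ * star Am)
          = Am * (star Υ * Υ) * star Am := by noncomm_ring
      rw [this, hUU]
      noncomm_ring
    · rw [hadj, hA1]
      have : star Am + -(Υ * star Am) + (star Υ - 1) * -(Υ * star Am)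
          = star Am - (star Υ * Υ) * star Am := by noncomm_ring
      rw [this, hUU]
      noncomm_ring
    · rw [hadj, hA0]
      have : star Υ - 1 + (Υ - 1) + (star Υ - 1) * (Υ - 1)
          = star Υ * Υ - 1 := by noncomm_ring
      rw [this, hUU]
      noncomm_ring
    · rw [hB2]; abel
    · rw [hA1, hA0]
      noncomm_ring
    · rw [hA0]
      simp only [star_sub, star_one]
      have : Υ - 1 + (star Υ - 1) + (Υ - 1) * (star Υ - 1)
          = Υ * star Υ - 1 := by noncomm_ring
      rw [this, hUUr]
      noncomm_ring
end

section
/- Binomial number-operator identity: for a measurable function f: 𝔜 → 𝔨 on the word/configuration space over ℝ and k ∈ ℕ, ∫ λ_{ξ+ω} 𝟏{#ξ = k} ‖f(ξ+ω)‖² = ⟨f | binom(N,k) | f⟩, i.e. splitting the symmetrized Lebesgue integral over configurations into a k-point subconfiguration ξ and remainder ω and integrating ‖f‖² over both yields ∑_n (1/n!)·binom(n,k) ∫_{ℝ^n} ‖f(t_1,…,t_n)‖² dt_1⋯dt_n, where (Nf)(w) = (#w)f(w) is the number operator. -/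
open MeasureTheory

/-- Binomial number-operator identity (Lemma 4.3.1): for a measurable family
`f` of symmetric `𝔨`-valued functions on the configuration space
`𝔜 = {∅} + ℝ + ℝ² + ⋯` (given by its components `f n : ℝⁿ → 𝔨`), splitting a
configuration into a `k`-point part `ξ` and a remainder `ω` and integrating
`‖f(ξ+ω)‖²` over both (with the symmetrized Lebesgue weights `1/k!`, `1/m!`)
equals `⟨f | binom(N,k) | f⟩ = ∑ₙ (1/n!)·C(n,k)·∫_{ℝⁿ} ‖f‖²`. -/
theorem binomial_number_operator_identity
    {𝔨 : Type*} [NormedAddCommGroup 𝔨]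
    (f : (n : ℕ) → (Fin n → ℝ) → 𝔨)
    (hmeas : ∀ n, Measurable fun v => ‖f n v‖)
    (hsym : ∀ (n : ℕ) (σ : Equiv.Perm (Fin n)) (v : Fin n → ℝ),
      f n (v ∘ σ) = f n v)
    (k : ℕ) :
    (Nat.factorial k : ENNReal)⁻¹ *
        ∑' m : ℕ, (Nat.factorial m : ENNReal)⁻¹ *
          ∫⁻ p : (Fin k → ℝ) × (Fin m → ℝ),
            (‖f (k + m) (Fin.append p.1 p.2)‖₊ : ENNReal) ^ 2
      = ∑' n : ℕ, (Nat.factorial n : ENNReal)⁻¹ * (n.choose k : ENNReal) *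
          ∫⁻ v : Fin n → ℝ, (‖f n v‖₊ : ENNReal) ^ 2 := by
  -- the summand on the RHS
  set a : ℕ → ENNReal := fun n => (Nat.factorial n : ENNReal)⁻¹ * (n.choose k : ENNReal) *
      ∫⁻ v : Fin n → ℝ, (‖f n v‖₊ : ENNReal) ^ 2 with ha
  -- Step 1: the product integral equals the integral over `Fin (k+m) → ℝ`.
  have hint : ∀ m : ℕ,
      (∫⁻ p : (Fin k → ℝ) × (Fin m → ℝ),
        (‖f (k + m) (Fin.append p.1 p.2)‖₊ : ENNReal) ^ 2)
      = ∫⁻ v : Fin (k + m) → ℝ, (‖f (k + m) v‖₊ : ENNReal) ^ 2 := by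
    intro m
    have hF : Measurable fun v : Fin (k + m) → ℝ => (‖f (k + m) v‖₊ : ENNReal) ^ 2 := by
      have : (fun v : Fin (k + m) → ℝ => (‖f (k + m) v‖₊ : ENNReal) ^ 2)
          = fun v => (ENNReal.ofReal ‖f (k + m) v‖) ^ 2 := by
        funext v; rw [ofReal_norm, enorm_eq_nnnorm]
      rw [this]
      exact (ENNReal.measurable_ofReal.comp (hmeas _)).pow_const 2
    have hmp : MeasurePreserving
        (fun p : (Fin k → ℝ) × (Fin m → ℝ) =>
          (MeasurableEquiv.piCongrLeft (fun _ => ℝ) finSumFinEquiv)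
            ((MeasurableEquiv.sumPiEquivProdPi (fun _ : Fin k ⊕ Fin m => ℝ)).symm p))
        volume volume :=
      (volume_measurePreserving_piCongrLeft (fun _ => ℝ) finSumFinEquiv).comp
        (volume_measurePreserving_sumPiEquivProdPi_symm (fun _ : Fin k ⊕ Fin m => ℝ))
    have happ : ∀ p : (Fin k → ℝ) × (Fin m → ℝ),
        Fin.append p.1 p.2 =
          (MeasurableEquiv.piCongrLeft (fun _ => ℝ) finSumFinEquiv)
            ((MeasurableEquiv.sumPiEquivProdPi (fun _ : Fin k ⊕ Fin m => ℝ)).symm p) := by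
      intro p
      funext i
      refine Fin.addCases (fun i => ?_) (fun i => ?_) i
      · have h : (Fin.castAdd m i) = finSumFinEquiv (Sum.inl i) := rfl
        rw [h, MeasurableEquiv.coe_piCongrLeft, Equiv.piCongrLeft_apply_apply, ← h,
          Fin.append_left]
        rfl
      · have h : (Fin.natAdd k i) = finSumFinEquiv (Sum.inr i) := rfl
        rw [h, MeasurableEquiv.coe_piCongrLeft, Equiv.piCongrLeft_apply_apply, ← h,
          Fin.append_right]
        rfl
    calc (∫⁻ p : (Fin k → ℝ) × (Fin m → ℝ),
            (‖f (k + m) (Fin.append p.1 p.2)‖₊ : ENNReal) ^ 2)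
        = ∫⁻ p : (Fin k → ℝ) × (Fin m → ℝ),
            (fun v : Fin (k + m) → ℝ => (‖f (k + m) v‖₊ : ENNReal) ^ 2)
              ((MeasurableEquiv.piCongrLeft (fun _ => ℝ) finSumFinEquiv)
                ((MeasurableEquiv.sumPiEquivProdPi (fun _ : Fin k ⊕ Fin m => ℝ)).symm p)) := by
          simp_rw [← happ]
      _ = ∫⁻ v : Fin (k + m) → ℝ, (‖f (k + m) v‖₊ : ENNReal) ^ 2 := hmp.lintegral_comp hF
  -- Step 2: combinatorial coefficient identity in `ENNReal`.
  have hcoeff : ∀ m : ℕ, (Nat.factorial k : ENNReal)⁻¹ * (Nat.factorial m : ENNReal)⁻¹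
      = ((Nat.factorial (k + m) : ENNReal)⁻¹ * ((k + m).choose k : ENNReal)) := by
    intro m
    have h : ((k + m).choose k) * Nat.factorial k * Nat.factorial m = Nat.factorial (k + m) := by
      have := Nat.choose_mul_factorial_mul_factorial (Nat.le_add_right k m)
      simpa [Nat.add_sub_cancel_left] using this
    have hc0 : ((k + m).choose k : ENNReal) ≠ 0 := by
      exact_mod_cast Nat.cast_ne_zero.2 (Nat.choose_pos (Nat.le_add_right k m)).ne'
    have hctop : ((k + m).choose k : ENNReal) ≠ ⊤ := ENNReal.natCast_ne_top _
    have hk0 : (Nat.factorial k : ENNReal) ≠ 0 := by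
      exact_mod_cast Nat.cast_ne_zero.2 (Nat.factorial_ne_zero k)
    have hm0 : (Nat.factorial m : ENNReal) ≠ 0 := by
      exact_mod_cast Nat.cast_ne_zero.2 (Nat.factorial_ne_zero m)
    have hktop : (Nat.factorial k : ENNReal) ≠ ⊤ := ENNReal.natCast_ne_top _
    have hmtop : (Nat.factorial m : ENNReal) ≠ ⊤ := ENNReal.natCast_ne_top _
    have hfact : (Nat.factorial (k + m) : ENNReal)
        = ((k + m).choose k : ENNReal) * (Nat.factorial k : ENNReal)
            * (Nat.factorial m : ENNReal) := by
      exact_mod_cast congrArg (Nat.cast : ℕ → ENNReal) h.symm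
    rw [hfact, ENNReal.mul_inv (Or.inl (mul_ne_zero hc0 hk0))
        (Or.inl (ENNReal.mul_ne_top hctop hktop)),
      ENNReal.mul_inv (Or.inl hc0) (Or.inl hctop)]
    rw [mul_comm _ (((k + m).choose k : ENNReal)), ← mul_assoc, ← mul_assoc,
      ENNReal.mul_inv_cancel hc0 hctop, one_mul]
  -- Step 3: reindex the RHS sum.
  have hsupp : Function.support a ⊆ Set.range (fun m : ℕ => k + m) := by
    intro n hn
    by_contra hr
    have hlt : n < k := by
      by_contra hge
      exact hr ⟨n - k, show k + (n - k) = n by omega⟩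
    apply hn
    simp [ha, Nat.choose_eq_zero_of_lt hlt]
  have hinj : Function.Injective (fun m : ℕ => k + m) := add_right_injective k
  have hre : (∑' m : ℕ, a (k + m)) = ∑' n : ℕ, a n := hinj.tsum_eq hsupp
  rw [← hre, ← ENNReal.tsum_mul_left]
  refine tsum_congr fun m => ?_
  rw [hint m, ha, ← mul_assoc, hcoeff m]
end

section
/- Coefficient correspondence for the Hamiltonian: let M_0, M_1, M_{−1}, G be bounded operators on a Hilbert space with M_0⁺ = M_0, M_1⁺ = M_{−1}, G⁺ = G. Define A_1 = (i − M_0/2)^{−1} M_1, A_0 = M_0 (i − M_0/2)^{−1}, A_{−1} = M_{−1}(i − M_0/2)^{−1}, B = −iG − (i/2) M_{−1}(i − M_0/2)^{−1} M_1 (noting i − M_0/2 is invertible since M_0 is self-adjoint). Then these operators satisfy the four equations C_1 = −iA_1 + M_1 + (1/2)M_0A_1 = 0, C_2 = −iA_0 + M_0 + (1/2)M_0A_0 = 0, C_3 = −iA_{−1} + M_{−1} + (1/2)M_{−1}A_0 = 0, C_4 = −iB + G + (1/2)M_{−1}A_1 = 0; moreover Υ := 1 + A_0 = (i + M_0/2)(i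 − M_0/2)^{−1} is unitary, A_1 = −ΥA_{−1}⁺, and B + B⁺ = −A_1⁺A_1. -/
open ContinuousLinearMap

private lemma aux_comm {R : Type*} [Ring R] (a t ti : R) (h1 : t * ti = 1)
    (h2 : ti * t = 1) (h : a * t = t * a) : a * ti = ti * a := by
  calc a * ti = ti * t * (a * ti) := by rw [h2, one_mul]
    _ = ti * (t * a) * ti := by simp only [mul_assoc]
    _ = ti * (a * t) * ti := by rw [h]
    _ = ti * a := by simp only [mul_assoc, h1, mul_one]

/-- Coefficient correspondence for the Hamiltonian: for bounded operators
`M₀, M₁, M₋₁, G` with `M₀⁺ = M₀`, `M₁⁺ = M₋₁`, `G⁺ = G`, the operator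
`T = i − M₀/2` is invertible, and setting `A₁ = T⁻¹M₁`, `A₀ = M₀T⁻¹`,
`A₋₁ = M₋₁T⁻¹`, `B = −iG − (i/2)M₋₁T⁻¹M₁`, the four equations
`−iA₁ + M₁ + ½M₀A₁ = 0`, `−iA₀ + M₀ + ½M₀A₀ = 0`,
`−iA₋₁ + M₋₁ + ½M₋₁A₀ = 0`, `−iB + G + ½M₋₁A₁ = 0` hold; moreover
`Υ := 1 + A₀ = (i + M₀/2)(i − M₀/2)⁻¹` is unitary, `A₁ = −ΥA₋₁⁺` and
`B + B⁺ = −A₁⁺A₁`. -/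
theorem hamiltonian_coefficient_correspondence
    {𝔨 : Type*} [NormedAddCommGroup 𝔨] [InnerProductSpace ℂ 𝔨] [CompleteSpace 𝔨]
    (M0 M1 Mm G : 𝔨 →L[ℂ] 𝔨)
    (hM0 : IsSelfAdjoint M0) (hM1 : adjoint M1 = Mm) (hG : IsSelfAdjoint G) :
    ∃ Tinv : 𝔨 →L[ℂ] 𝔨,
      (Complex.I • (1 : 𝔨 →L[ℂ] 𝔨) - (2 : ℂ)⁻¹ • M0) * Tinv = 1 ∧
      Tinv * (Complex.I • (1 : 𝔨 →L[ℂ] 𝔨) - (2 : ℂ)⁻¹ • M0) = 1 ∧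
      (-(Complex.I • (Tinv * M1)) + M1 + (2 : ℂ)⁻¹ • (M0 * (Tinv * M1)) = 0) ∧
      (-(Complex.I • (M0 * Tinv)) + M0 + (2 : ℂ)⁻¹ • (M0 * (M0 * Tinv)) = 0) ∧
      (-(Complex.I • (Mm * Tinv)) + Mm + (2 : ℂ)⁻¹ • (Mm * (M0 * Tinv)) = 0) ∧
      (-(Complex.I •
            (-(Complex.I • G) - ((2 : ℂ)⁻¹ * Complex.I) • (Mm * Tinv * M1)))
          + G + (2 : ℂ)⁻¹ • (Mm * (Tinv * M1)) = 0) ∧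
      (1 + M0 * Tinv
        = (Complex.I • (1 : 𝔨 →L[ℂ] 𝔨) + (2 : ℂ)⁻¹ • M0) * Tinv) ∧
      (adjoint (1 + M0 * Tinv) * (1 + M0 * Tinv) = 1) ∧
      ((1 + M0 * Tinv) * adjoint (1 + M0 * Tinv) = 1) ∧
      (Tinv * M1 = -((1 + M0 * Tinv) * adjoint (Mm * Tinv))) ∧
      ((-(Complex.I • G) - ((2 : ℂ)⁻¹ * Complex.I) • (Mm * Tinv * M1))
          + adjoint (-(Complex.I • G) - ((2 : ℂ)⁻¹ * Complex.I) • (Mm * Tinv * M1))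
        = -(adjoint (Tinv * M1) * (Tinv * M1))) := by
  set T : 𝔨 →L[ℂ] 𝔨 := Complex.I • (1 : 𝔨 →L[ℂ] 𝔨) - (2 : ℂ)⁻¹ • M0 with hTdef
  set S : 𝔨 →L[ℂ] 𝔨 := Complex.I • (1 : 𝔨 →L[ℂ] 𝔨) + (2 : ℂ)⁻¹ • M0 with hSdef
  have hM0star : star M0 = M0 := hM0
  have hGstar : star G = G := hG
  have hMmstar : star Mm = M1 := by rw [← hM1, ← star_eq_adjoint, star_star]
  have hM1star : star M1 = Mm := by rw [← hM1, ← star_eq_adjoint]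
  have hstarT : star T = -S := by
    rw [hTdef, hSdef]
    simp only [star_sub, star_smul, star_one, Complex.star_def, Complex.conj_I,
      map_inv₀, Complex.conj_ofNat, hM0star]
    module
  have hstarS : star S = -T := by
    rw [hTdef, hSdef]
    simp only [star_add, star_smul, star_one, Complex.star_def, Complex.conj_I,
      map_inv₀, Complex.conj_ofNat, hM0star]
    module
  -- invertibility of T
  have h2I : (2 * Complex.I) ∉ spectrum ℂ M0 := by
    intro h
    have := hM0.mem_spectrum_eq_re h
    simp [Complex.ext_iff] at this
  have hTu : IsUnit T := by
    have hhalf : IsUnit ((2 : ℂ)⁻¹ • (1 : 𝔨 →L[ℂ] 𝔨)) := by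
      rw [← Algebra.algebraMap_eq_smul_one]
      exact (isUnit_iff_ne_zero.mpr (by norm_num)).map _
    have hrw : T = ((2 : ℂ)⁻¹ • (1 : 𝔨 →L[ℂ] 𝔨)) *
        (algebraMap ℂ (𝔨 →L[ℂ] 𝔨) (2 * Complex.I) - M0) := by
      rw [hTdef, Algebra.algebraMap_eq_smul_one]
      simp only [smul_mul_assoc, one_mul]
      module
    rw [hrw]
    exact hhalf.mul (spectrum.notMem_iff.mp h2I)
  obtain ⟨uT, huT⟩ := hTu
  refine ⟨↑uT⁻¹, ?_⟩
  set Tinv : 𝔨 →L[ℂ] 𝔨 := ↑uT⁻¹ with hTinvdef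
  have hTT : T * Tinv = 1 := by rw [hTinvdef, ← huT, Units.mul_inv]
  have hTT' : Tinv * T = 1 := by rw [hTinvdef, ← huT, Units.inv_mul]
  set V : 𝔨 →L[ℂ] 𝔨 := star Tinv with hVdef
  have hVS : V * S = -1 := by
    have h := congrArg star hTT
    rw [star_mul, star_one, hstarT, mul_neg, ← hVdef] at h
    exact neg_eq_iff_eq_neg.mp h
  have hSV : S * V = -1 := by
    have h := congrArg star hTT'
    rw [star_mul, star_one, hstarT, neg_mul, ← hVdef] at h
    exact neg_eq_iff_eq_neg.mp h
  -- commutation facts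
  have hM0T : M0 * T = T * M0 := by
    rw [hTdef]
    simp only [mul_sub, sub_mul, mul_smul_comm, smul_mul_assoc, mul_one, one_mul]
  have hTS : T * S = S * T := by
    rw [hTdef, hSdef]
    simp only [mul_add, add_mul, mul_sub, sub_mul, mul_smul_comm, smul_mul_assoc,
      mul_one, one_mul]
    module
  have hM0Tinv : M0 * Tinv = Tinv * M0 := aux_comm M0 T Tinv hTT hTT' hM0T
  have hSTinv : S * Tinv = Tinv * S := aux_comm S T Tinv hTT hTT' hTS.symm
  have hnVS : (-V) * S = 1 := by rw [neg_mul, hVS, neg_neg]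
  have hSnV : S * (-V) = 1 := by rw [mul_neg, hSV, neg_neg]
  have hTV : T * V = V * T := by
    have h := aux_comm T S (-V) hSnV hnVS hTS
    rw [mul_neg, neg_mul] at h
    exact neg_injective h
  have hTinvV : Tinv * V = V * Tinv := by
    have h := aux_comm Tinv S (-V) hSnV hnVS hSTinv.symm
    rw [mul_neg, neg_mul] at h
    exact neg_injective h
  -- the T-multiplication expansion
  have key : ∀ X : 𝔨 →L[ℂ] 𝔨,
      T * X = Complex.I • X - (2 : ℂ)⁻¹ • (M0 * X) := by
    intro X
    rw [hTdef]
    simp only [sub_mul, smul_mul_assoc, one_mul]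
  -- Υ = S Tinv
  have hUps : 1 + M0 * Tinv = S * Tinv := by
    have hST : S = T + M0 := by rw [hTdef, hSdef]; module
    rw [hST, add_mul, hTT]
  refine ⟨hTT, hTT', ?_, ?_, ?_, ?_, hUps, ?_, ?_, ?_, ?_⟩
  · -- C1
    have e : -(Complex.I • (Tinv * M1)) + M1 + (2 : ℂ)⁻¹ • (M0 * (Tinv * M1))
        = M1 - T * (Tinv * M1) := by rw [key (Tinv * M1)]; abel
    rw [e, ← mul_assoc, hTT, one_mul, sub_self]
  · -- C2
    have e : -(Complex.I • (M0 * Tinv)) + M0 + (2 : ℂ)⁻¹ • (M0 * (M0 * Tinv))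
        = M0 - T * (M0 * Tinv) := by rw [key (M0 * Tinv)]; abel
    rw [e, ← mul_assoc, ← hM0T, mul_assoc, hTT, mul_one, sub_self]
  · -- C3
    have e0 : Mm * (T * Tinv) = Complex.I • (Mm * Tinv)
        - (2 : ℂ)⁻¹ • (Mm * (M0 * Tinv)) := by
      rw [key Tinv, mul_sub, mul_smul_comm, mul_smul_comm]
    have e : -(Complex.I • (Mm * Tinv)) + Mm + (2 : ℂ)⁻¹ • (Mm * (M0 * Tinv))
        = Mm - Mm * (T * Tinv) := by rw [e0]; abel
    rw [e, hTT, mul_one, sub_self]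
  · -- C4
    rw [mul_assoc]
    match_scalars <;> simp [Complex.ext_iff]
  · -- unitarity 1
    rw [← star_eq_adjoint, hUps, star_mul, hstarS, ← hVdef]
    have k1 : T * (S * Tinv) = S := by rw [← mul_assoc, hTS, mul_assoc, hTT, mul_one]
    calc V * -T * (S * Tinv) = -(V * (T * (S * Tinv))) := by
          simp only [mul_neg, neg_mul, mul_assoc]
      _ = 1 := by rw [k1, hVS, neg_neg]
  · -- unitarity 2
    rw [← star_eq_adjoint, hUps, star_mul, hstarS, ← hVdef]
    have k2 : Tinv * (V * T) = V := by
      rw [← hTV, ← mul_assoc, hTT', one_mul]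
    calc S * Tinv * (V * -T) = -(S * (Tinv * (V * T))) := by
          simp only [mul_neg, neg_mul, mul_assoc]
      _ = 1 := by rw [k2, hSV, neg_neg]
  · -- A1 = -Υ A₋₁⁺
    rw [← star_eq_adjoint, hUps, star_mul, hMmstar, ← hVdef]
    calc Tinv * M1 = -(-1 * (Tinv * M1)) := by rw [neg_mul, one_mul, neg_neg]
      _ = -(S * V * (Tinv * M1)) := by rw [hSV]
      _ = -(S * Tinv * (V * M1)) := by
          simp only [mul_assoc]
          rw [← mul_assoc V Tinv M1, ← hTinvV, mul_assoc]
  · -- B + B⁺ = -A₁⁺A₁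
    rw [← star_eq_adjoint, ← star_eq_adjoint]
    have hstarTM1 : star (Tinv * M1) = Mm * V := by
      rw [star_mul, hM1star, hVdef]
    have hstarMmT : star (Mm * Tinv * M1) = Mm * (V * M1) := by
      rw [star_mul, star_mul, hM1star, hMmstar, ← hVdef]
    have hdiff : V - Tinv = (2 * Complex.I) • (V * Tinv) := by
      have hTpS : T + S = (2 * Complex.I) • 1 := by rw [hTdef, hSdef]; module
      have h1 : V = V * (T * Tinv) := by rw [hTT, mul_one]
      have h2 : Tinv = -(V * (S * Tinv)) := by
        rw [← mul_assoc, hVS, neg_mul, one_mul, neg_neg]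
      calc V - Tinv = V * (T * Tinv) - -(V * (S * Tinv)) := by rw [← h1, ← h2]
        _ = V * ((T + S) * Tinv) := by
            rw [add_mul T S Tinv, mul_add V (T * Tinv) (S * Tinv), sub_neg_eq_add]
        _ = (2 * Complex.I) • (V * Tinv) := by
            rw [hTpS, smul_mul_assoc, one_mul, mul_smul_comm]
    have hkey : ((2 : ℂ)⁻¹ * Complex.I) • (V - Tinv) = -(V * Tinv) := by
      rw [hdiff, smul_smul]
      have : (2 : ℂ)⁻¹ * Complex.I * (2 * Complex.I) = -1 := by
        have := Complex.I_mul_I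
        field_simp
        linear_combination this
      rw [this, neg_one_smul]
    have hstarB : star (-(Complex.I • G)
        - ((2 : ℂ)⁻¹ * Complex.I) • (Mm * Tinv * M1))
        = Complex.I • G + ((2 : ℂ)⁻¹ * Complex.I) • (Mm * (V * M1)) := by
      rw [star_sub, star_neg, star_smul, star_smul, hGstar, hstarMmT]
      simp only [Complex.star_def, map_mul, map_inv₀, Complex.conj_ofNat,
        Complex.conj_I]
      module
    rw [hstarB, hstarTM1]
    have lhs_eq : -(Complex.I • G) - ((2 : ℂ)⁻¹ * Complex.I) • (Mm * Tinv * M1)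
        + (Complex.I • G + ((2 : ℂ)⁻¹ * Complex.I) • (Mm * (V * M1)))
        = ((2 : ℂ)⁻¹ * Complex.I) • (Mm * ((V - Tinv) * M1)) := by
      rw [mul_assoc, sub_mul, mul_sub]
      module
    rw [lhs_eq]
    calc ((2 : ℂ)⁻¹ * Complex.I) • (Mm * ((V - Tinv) * M1))
        = Mm * ((((2 : ℂ)⁻¹ * Complex.I) • (V - Tinv)) * M1) := by
          rw [smul_mul_assoc, mul_smul_comm]
      _ = -(Mm * V * (Tinv * M1)) := by
          rw [hkey]
          simp only [neg_mul, mul_neg, mul_assoc]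
end
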